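/- Validity of Powerset: let A be a complete Heyting algebra and u an A-name. Define the A-name w with dom(w) = {f : f is a function from dom(u) to A} and w(f) = ‖∀y(y∈f → y∈u)‖. Then for every A-name v, ‖v ∈ w‖ = ‖∀y(y∈v → y∈u)‖; in particular ‖∀z(z∈w ↔ ∀y(y∈z → y∈u))‖ = 1, so the Powerset axiom ∀x∃w∀z(z∈w ↔ ∀y∈z(y∈x)) is valid in V^A. -/

import Mathlib

universe u

namespace Ordinal

/-- Natural (Hessenberg) sum of ordinals. -/
noncomputable def nadd : Ordinal.{u} → Ordinal.{u} → Ordinal.{u}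
  | a, b => max (blsub.{u, u} a fun a' _ => nadd a' b) (blsub.{u, u} b fun b' _ => nadd a b')
termination_by a b => (a, b)

infixl:65 " ♯ " => Ordinal.nadd

theorem nadd_def (a b : Ordinal.{u}) :
    a ♯ b = max (blsub.{u, u} a fun a' _ => a' ♯ b) (blsub.{u, u} b fun b' _ => a ♯ b') := by
  rw [nadd]

theorem nadd_lt_nadd_right {b c : Ordinal.{u}} (h : b < c) (a : Ordinal.{u}) : b ♯ a < c ♯ a := by
  rw [nadd_def c a]
  exact lt_max_of_lt_left (lt_blsub.{u, u} (fun a' _ => a' ♯ a) b h)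

theorem nadd_lt_nadd_left {b c : Ordinal.{u}} (h : b < c) (a : Ordinal.{u}) : a ♯ b < a ♯ c := by
  rw [nadd_def a c]
  exact lt_max_of_lt_right (lt_blsub.{u, u} (fun b' _ => a ♯ b') b h)

theorem nadd_le_nadd_right {b c : Ordinal.{u}} (h : b ≤ c) (a : Ordinal.{u}) : b ♯ a ≤ c ♯ a := by
  rcases h.lt_or_eq with h | rfl
  · exact (nadd_lt_nadd_right h a).le
  · exact le_rfl

theorem nadd_le_nadd_left {b c : Ordinal.{u}} (h : b ≤ c) (a : Ordinal.{u}) : a ♯ b ≤ a ♯ c := by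
  rcases h.lt_or_eq with h | rfl
  · exact (nadd_lt_nadd_left h a).le
  · exact le_rfl

theorem nadd_le_iff {a b c : Ordinal.{u}} :
    a ♯ b ≤ c ↔ (∀ a' < a, a' ♯ b < c) ∧ (∀ b' < b, a ♯ b' < c) := by
  rw [nadd_def, max_le_iff, blsub_le_iff, blsub_le_iff]

theorem nadd_comm (a b : Ordinal.{u}) : a ♯ b = b ♯ a := by
  induction a using Ordinal.induction generalizing b with
  | h a IHa =>
  induction b using Ordinal.induction with
  | h b IHb =>
  apply le_antisymm
  · rw [nadd_le_iff]
    refine ⟨fun a' h => ?_, fun b' h => ?_⟩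
    · rw [IHa a' h b]; exact nadd_lt_nadd_left h b
    · rw [IHb b' h]; exact nadd_lt_nadd_right h a
  · rw [nadd_le_iff]
    refine ⟨fun b' h => ?_, fun a' h => ?_⟩
    · rw [← IHb b' h]; exact nadd_lt_nadd_left h a
    · rw [← IHa a' h b]; exact nadd_lt_nadd_right h b

theorem nadd_assoc (a b c : Ordinal.{u}) : a ♯ b ♯ c = a ♯ (b ♯ c) := by
  induction a using Ordinal.induction generalizing b c with
  | h a IHa =>
  induction b using Ordinal.induction generalizing c with
  | h b IHb =>
  induction c using Ordinal.induction with
  | h c IHc =>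
  apply le_antisymm
  · rw [nadd_le_iff]
    refine ⟨fun d hd => ?_, fun c' hc => ?_⟩
    · rw [nadd_def a b, lt_max_iff, lt_blsub_iff, lt_blsub_iff] at hd
      rcases hd with ⟨a', ha, hd⟩ | ⟨b', hb, hd⟩
      · calc d ♯ c ≤ a' ♯ b ♯ c := nadd_le_nadd_right hd c
          _ = a' ♯ (b ♯ c) := IHa a' ha b c
          _ < a ♯ (b ♯ c) := nadd_lt_nadd_right ha _
      · calc d ♯ c ≤ a ♯ b' ♯ c := nadd_le_nadd_right hd c
          _ = a ♯ (b' ♯ c) := IHb b' hb c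
          _ < a ♯ (b ♯ c) := nadd_lt_nadd_left (nadd_lt_nadd_right hb c) a
    · calc a ♯ b ♯ c' = a ♯ (b ♯ c') := IHc c' hc
        _ < a ♯ (b ♯ c) := nadd_lt_nadd_left (nadd_lt_nadd_left hc b) a
  · rw [nadd_le_iff]
    refine ⟨fun a' ha => ?_, fun d hd => ?_⟩
    · calc a' ♯ (b ♯ c) = a' ♯ b ♯ c := (IHa a' ha b c).symm
        _ < a ♯ b ♯ c := nadd_lt_nadd_right (nadd_lt_nadd_right ha b) c
    · rw [nadd_def b c, lt_max_iff, lt_blsub_iff, lt_blsub_iff] at hd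
      rcases hd with ⟨b', hb, hd⟩ | ⟨c', hc, hd⟩
      · calc a ♯ d ≤ a ♯ (b' ♯ c) := nadd_le_nadd_left hd a
          _ = a ♯ b' ♯ c := (IHb b' hb c).symm
          _ < a ♯ b ♯ c := nadd_lt_nadd_right (nadd_lt_nadd_left hb a) c
      · calc a ♯ d ≤ a ♯ (b ♯ c') := nadd_le_nadd_left hd a
          _ = a ♯ b ♯ c' := (IHc c' hc).symm
          _ < a ♯ b ♯ c := nadd_lt_nadd_left hc _

end Ordinal

/-- The universe `V^A` of `A`-names over a complete Heyting algebra `A`: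
an `A`-name is a function from a set (of previously constructed `A`-names)
into `A`, here encoded by an indexing type `ι`, a family `elts` of names and
the family `val` of their attached truth values. -/
inductive HName (A : Type u) : Type (u + 1) where
  | mk (ι : Type u) (elts : ι → HName A) (val : ι → A)

namespace HName

variable {A : Type u}

/-- The indexing type of (the domain of) a name. -/
def ι : HName A → Type u
  | mk ι _ _ => ι

/-- The members of (the domain of) a name. -/
def elts : (u : HName A) → u.ι → HName A
  | mk _ e _ => e

/-- The values attached by a name to the members of its domain. -/
def val : (u : HName A) → u.ι → A
  | mk _ _ v => v

/-- Ordinal rank of a name (used for the recursive definition of truth values). -/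
noncomputable def rank : HName A → Ordinal.{u}
  | mk _ e _ => Ordinal.lsub fun i => (e i).rank

theorem rank_lt {ι : Type u} (e : ι → HName A) (v : ι → A) (i : ι) :
    (e i).rank < (mk ι e v).rank := Ordinal.lt_lsub _ i

variable [Order.Frame A]

/-- The truth value `‖u ≈ v‖` of equality of two names, defined by the recursion
`‖u ≈ v‖ = ⨅_{x ∈ dom u} (u(x) ⇨ ‖x ∈ v‖) ⊓ ⨅_{y ∈ dom v} (v(y) ⇨ ‖y ∈ u‖)`,
where `‖x ∈ v‖ = ⨆_{y ∈ dom v} (v(y) ⊓ ‖y ≈ x‖)` is inlined. -/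
noncomputable def eqVal : HName A → HName A → A
  | mk ι e a, mk κ f b =>
      (⨅ i, a i ⇨ ⨆ j, b j ⊓ eqVal (f j) (e i)) ⊓
      (⨅ j, b j ⇨ ⨆ i, a i ⊓ eqVal (e i) (f j))
termination_by u v => max u.rank v.rank
decreasing_by
  · exact max_lt ((rank_lt f b j).trans_le (le_max_right _ _))
      ((rank_lt e a i).trans_le (le_max_left _ _))
  · exact max_lt ((rank_lt e a i).trans_le (le_max_left _ _))
      ((rank_lt f b j).trans_le (le_max_right _ _))

/-- The truth value `‖u ∈ v‖ = ⨆_{x ∈ dom v} (v(x) ⊓ ‖x ≈ u‖)` of membership. -/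
noncomputable def memVal (u v : HName A) : A :=
  ⨆ j : v.ι, v.val j ⊓ eqVal (v.elts j) u


@[simp] theorem ι_mk {κ : Type u} (e : κ → HName A) (a : κ → A) :
    (mk κ e a : HName A).ι = κ := rfl

@[simp] theorem elts_mk {κ : Type u} (e : κ → HName A) (a : κ → A) :
    (mk κ e a : HName A).elts = e := rfl

@[simp] theorem val_mk {κ : Type u} (e : κ → HName A) (a : κ → A) :
    (mk κ e a : HName A).val = a := rfl

theorem rank_elts_lt (x : HName A) (i : x.ι) : (x.elts i).rank < x.rank := by
  obtain ⟨κ, e, a⟩ := x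
  exact rank_lt e a i

theorem nadd3_rot (a b c : Ordinal) : a ♯ b ♯ c = b ♯ c ♯ a := by
  rw [Ordinal.nadd_assoc, Ordinal.nadd_comm]

theorem memVal_def (x y : HName A) :
    memVal x y = ⨆ j, y.val j ⊓ eqVal (y.elts j) x := rfl

theorem eqVal_def (x y : HName A) :
    eqVal x y = (⨅ i, x.val i ⇨ memVal (x.elts i) y) ⊓
      (⨅ j, y.val j ⇨ memVal (y.elts j) x) := by
  obtain ⟨ι, e, a⟩ := x
  obtain ⟨κ, f, b⟩ := y
  rw [eqVal]
  rfl

theorem eqVal_symm (x y : HName A) : eqVal x y = eqVal y x := by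
  obtain ⟨ι, e, a⟩ := x
  obtain ⟨κ, f, b⟩ := y
  rw [eqVal, eqVal, inf_comm]

theorem eqVal_refl (x : HName A) : eqVal x x = ⊤ := by
  induction x with
  | mk κ e a ih =>
    rw [eqVal, inf_idem, eq_top_iff]
    refine le_iInf fun i => le_himp_iff.mpr ?_
    rw [top_inf_eq]
    exact le_iSup_of_le i (by rw [ih i, inf_top_eq])

theorem key : ∀ (o : Ordinal) (x y z : HName A), x.rank ♯ y.rank ♯ z.rank = o →
    (eqVal x y ⊓ eqVal y z ≤ eqVal x z) ∧
    (eqVal x y ⊓ memVal x z ≤ memVal y z) ∧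
    (eqVal x y ⊓ memVal z x ≤ memVal z y) := by
  intro o
  induction o using Ordinal.induction with
  | h o IH =>
  rintro x y z rfl
  have T : ∀ x' y' z' : HName A,
      x'.rank ♯ y'.rank ♯ z'.rank < x.rank ♯ y.rank ♯ z.rank →
      eqVal x' y' ⊓ eqVal y' z' ≤ eqVal x' z' :=
    fun x' y' z' h => (IH _ h x' y' z' rfl).1
  have M2 : ∀ x' y' z' : HName A,
      x'.rank ♯ y'.rank ♯ z'.rank < x.rank ♯ y.rank ♯ z.rank →
      eqVal x' y' ⊓ memVal z' x' ≤ memVal z' y' :=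
    fun x' y' z' h => (IH _ h x' y' z' rfl).2.2
  have hxy : ∀ i : x.ι, eqVal x y ⊓ x.val i ≤ memVal (x.elts i) y := fun i =>
    le_himp_iff.mp ((eqVal_def x y ▸ inf_le_left : eqVal x y ≤ _).trans (iInf_le _ i))
  refine ⟨?_, ?_, ?_⟩
  · -- transitivity
    rw [eqVal_def x z]
    refine le_inf (le_iInf fun i => le_himp_iff.mpr ?_) (le_iInf fun k => le_himp_iff.mpr ?_)
    · have hr : y.rank ♯ z.rank ♯ (x.elts i).rank < x.rank ♯ y.rank ♯ z.rank := by
        calc y.rank ♯ z.rank ♯ (x.elts i).rank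
            < y.rank ♯ z.rank ♯ x.rank := Ordinal.nadd_lt_nadd_left (rank_elts_lt x i) _
          _ = x.rank ♯ y.rank ♯ z.rank := by rw [nadd3_rot, nadd3_rot]
      calc eqVal x y ⊓ eqVal y z ⊓ x.val i
          ≤ eqVal y z ⊓ (eqVal x y ⊓ x.val i) := by
            rw [inf_comm (eqVal x y) (eqVal y z), inf_assoc]
        _ ≤ eqVal y z ⊓ memVal (x.elts i) y := inf_le_inf_left _ (hxy i)
        _ ≤ memVal (x.elts i) z := M2 y z (x.elts i) hr
    · have hr : y.rank ♯ x.rank ♯ (z.elts k).rank < x.rank ♯ y.rank ♯ z.rank := by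
        calc y.rank ♯ x.rank ♯ (z.elts k).rank
            < y.rank ♯ x.rank ♯ z.rank := Ordinal.nadd_lt_nadd_left (rank_elts_lt z k) _
          _ = x.rank ♯ y.rank ♯ z.rank := by rw [Ordinal.nadd_comm y.rank x.rank]
      have hyz : eqVal y z ⊓ z.val k ≤ memVal (z.elts k) y :=
        le_himp_iff.mp ((eqVal_def y z ▸ inf_le_right : eqVal y z ≤ _).trans (iInf_le _ k))
      calc eqVal x y ⊓ eqVal y z ⊓ z.val k
          ≤ eqVal x y ⊓ (eqVal y z ⊓ z.val k) := by rw [inf_assoc]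
        _ ≤ eqVal y x ⊓ memVal (z.elts k) y := by
            rw [eqVal_symm x y]; exact inf_le_inf_left _ hyz
        _ ≤ memVal (z.elts k) x := M2 y x (z.elts k) hr
  · -- M1
    rw [memVal, memVal, inf_iSup_eq]
    refine iSup_le fun k => ?_
    have hr : (z.elts k).rank ♯ x.rank ♯ y.rank < x.rank ♯ y.rank ♯ z.rank := by
      calc (z.elts k).rank ♯ x.rank ♯ y.rank
          = x.rank ♯ y.rank ♯ (z.elts k).rank := by rw [nadd3_rot]
        _ < x.rank ♯ y.rank ♯ z.rank := Ordinal.nadd_lt_nadd_left (rank_elts_lt z k) _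
    calc eqVal x y ⊓ (z.val k ⊓ eqVal (z.elts k) x)
        ≤ z.val k ⊓ (eqVal (z.elts k) x ⊓ eqVal x y) := by
          rw [inf_comm (eqVal x y), inf_assoc, inf_comm (eqVal (z.elts k) x)]
      _ ≤ z.val k ⊓ eqVal (z.elts k) y := inf_le_inf_left _ (T (z.elts k) x y hr)
      _ ≤ ⨆ j, z.val j ⊓ eqVal (z.elts j) y := le_iSup_of_le k le_rfl
  · -- M2
    rw [memVal, memVal, inf_iSup_eq]
    refine iSup_le fun i => ?_
    have h1 : eqVal x y ⊓ (x.val i ⊓ eqVal (x.elts i) z)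
        ≤ memVal (x.elts i) y ⊓ eqVal (x.elts i) z := by
      rw [← inf_assoc]; exact inf_le_inf_right _ (hxy i)
    refine h1.trans ?_
    rw [memVal, iSup_inf_eq]
    refine iSup_le fun j => ?_
    have hr : (y.elts j).rank ♯ (x.elts i).rank ♯ z.rank < x.rank ♯ y.rank ♯ z.rank := by
      refine Ordinal.nadd_lt_nadd_right ?_ _
      calc (y.elts j).rank ♯ (x.elts i).rank
          < (y.elts j).rank ♯ x.rank := Ordinal.nadd_lt_nadd_left (rank_elts_lt x i) _
        _ ≤ y.rank ♯ x.rank := Ordinal.nadd_le_nadd_right (rank_elts_lt y j).le _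
        _ = x.rank ♯ y.rank := Ordinal.nadd_comm _ _
    calc y.val j ⊓ eqVal (y.elts j) (x.elts i) ⊓ eqVal (x.elts i) z
        ≤ y.val j ⊓ (eqVal (y.elts j) (x.elts i) ⊓ eqVal (x.elts i) z) := by rw [inf_assoc]
      _ ≤ y.val j ⊓ eqVal (y.elts j) z :=
          inf_le_inf_left _ (T (y.elts j) (x.elts i) z hr)
      _ ≤ ⨆ j', y.val j' ⊓ eqVal (y.elts j') z := le_iSup_of_le j le_rfl

theorem eqVal_inf_memVal_le (x y z : HName A) :
    eqVal x y ⊓ memVal z x ≤ memVal z y := (key _ x y z rfl).2.2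

theorem powVal (u v : HName A) :
    memVal v
        (HName.mk (u.ι → A) (fun f => HName.mk u.ι u.elts f)
          (fun f => ⨅ z : HName A,
            memVal z (HName.mk u.ι u.elts f) ⇨ memVal z u)) =
      ⨅ z : HName A, memVal z v ⇨ memVal z u := by
  apply le_antisymm
  · rw [memVal]
    refine iSup_le fun f => le_iInf fun z => le_himp_iff.mpr ?_
    simp only [ι_mk, elts_mk, val_mk]
    calc (⨅ z' : HName A, memVal z' (mk u.ι u.elts f) ⇨ memVal z' u) ⊓
          eqVal (mk u.ι u.elts f) v ⊓ memVal z v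
        ≤ (memVal z (mk u.ι u.elts f) ⇨ memVal z u) ⊓
            (eqVal v (mk u.ι u.elts f) ⊓ memVal z v) := by
          rw [eqVal_symm (mk u.ι u.elts f) v, inf_assoc]
          exact inf_le_inf (iInf_le _ z) le_rfl
      _ ≤ (memVal z (mk u.ι u.elts f) ⇨ memVal z u) ⊓ memVal z (mk u.ι u.elts f) :=
          inf_le_inf_left _ (eqVal_inf_memVal_le v (mk u.ι u.elts f) z)
      _ ≤ memVal z u := himp_inf_le
  · rw [memVal]
    refine le_iSup_of_le (fun i => u.val i ⊓ memVal (u.elts i) v) ?_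
    simp only [ι_mk, elts_mk, val_mk]
    refine le_inf (le_iInf fun z => le_himp_iff.mpr ?_) ?_
    · -- (⨅ ...) ⊓ memVal z (restricted name) ≤ memVal z u
      have hle : memVal z (mk u.ι u.elts (fun i => u.val i ⊓ memVal (u.elts i) v))
          ≤ memVal z u := by
        rw [memVal_def z (mk u.ι u.elts _), memVal_def z u]
        simp only [ι_mk, elts_mk, val_mk]
        exact iSup_mono fun i => inf_le_inf_right _ inf_le_left
      exact inf_le_right.trans hle
    · -- (⨅ ...) ≤ eqVal (restricted name) v
      rw [eqVal_def]
      simp only [ι_mk, elts_mk, val_mk]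
      refine le_inf (le_iInf fun i => le_himp_iff.mpr ?_) (le_iInf fun j => le_himp_iff.mpr ?_)
      · exact inf_le_right.trans inf_le_right
      · have hj : v.val j ≤ memVal (v.elts j) v := by
          rw [memVal_def (v.elts j) v]
          exact le_iSup_of_le j (le_inf le_rfl (by rw [eqVal_refl]; exact le_top))
        have h2 : (⨅ z : HName A, memVal z v ⇨ memVal z u) ⊓ v.val j
            ≤ memVal (v.elts j) u ⊓ v.val j := by
          refine le_inf ?_ inf_le_right
          calc (⨅ z : HName A, memVal z v ⇨ memVal z u) ⊓ v.val j
              ≤ (memVal (v.elts j) v ⇨ memVal (v.elts j) u) ⊓ memVal (v.elts j) v :=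
                inf_le_inf (iInf_le _ (v.elts j)) hj
            _ ≤ memVal (v.elts j) u := himp_inf_le
        refine h2.trans ?_
        rw [memVal_def (v.elts j) u,
          memVal_def (v.elts j) (mk u.ι u.elts (fun i => u.val i ⊓ memVal (u.elts i) v)),
          iSup_inf_eq]
        simp only [ι_mk, elts_mk, val_mk]
        refine iSup_le fun i => le_iSup_of_le i ?_
        show u.val i ⊓ eqVal (u.elts i) (v.elts j) ⊓ v.val j
            ≤ (u.val i ⊓ memVal (u.elts i) v) ⊓ eqVal (u.elts i) (v.elts j)
        refine le_inf (le_inf (inf_le_left.trans inf_le_left) ?_)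
          (inf_le_left.trans inf_le_right)
        rw [memVal_def (u.elts i) v]
        refine le_iSup_of_le j (le_inf inf_le_right ?_)
        rw [eqVal_symm (v.elts j) (u.elts i)]
        exact inf_le_left.trans inf_le_right

end HName


open HName in
/-- Validity of Powerset: for a name `u`, the name `w` whose domain consists of all
functions `f : dom u → A` (regarded as names with domain `dom u`), with
`w(f) = ‖∀y(y∈f → y∈u)‖`, satisfies `‖v ∈ w‖ = ‖∀y(y∈v → y∈u)‖` for every name `v`;
in particular `‖∀z(z∈w ↔ ∀y(y∈z → y∈u))‖ = 1` and the Powerset axiom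
`∀x∃w∀z(z∈w ↔ ∀y∈z(y∈x))` is valid in `V^A`. -/
theorem powerset_valid {A : Type u} [Order.Frame A] (u : HName A) :
    (∀ v : HName A,
        memVal v
            (HName.mk (u.ι → A) (fun f => HName.mk u.ι u.elts f)
              (fun f => ⨅ z : HName A,
                memVal z (HName.mk u.ι u.elts f) ⇨ memVal z u)) =
          ⨅ z : HName A, memVal z v ⇨ memVal z u) ∧
      ((⨅ v : HName A,
          (memVal v
              (HName.mk (u.ι → A) (fun f => HName.mk u.ι u.elts f)
                (fun f => ⨅ z : HName A,
                  memVal z (HName.mk u.ι u.elts f) ⇨ memVal z u)) ⇨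
            ⨅ z : HName A, memVal z v ⇨ memVal z u) ⊓
          ((⨅ z : HName A, memVal z v ⇨ memVal z u) ⇨
            memVal v
              (HName.mk (u.ι → A) (fun f => HName.mk u.ι u.elts f)
                (fun f => ⨅ z : HName A,
                  memVal z (HName.mk u.ι u.elts f) ⇨ memVal z u)))) = ⊤) ∧
      ((⨅ x : HName A, ⨆ w : HName A, ⨅ z : HName A,
          (memVal z w ⇨ ⨅ y : HName A, memVal y z ⇨ memVal y x) ⊓
            ((⨅ y : HName A, memVal y z ⇨ memVal y x) ⇨ memVal z w)) = ⊤) := by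
  refine ⟨HName.powVal u, ?_, ?_⟩
  · simp [HName.powVal]
  · rw [eq_top_iff]
    refine le_iInf fun x => le_iSup_of_le
      (HName.mk (x.ι → A) (fun f => HName.mk x.ι x.elts f)
        (fun f => ⨅ z : HName A, memVal z (HName.mk x.ι x.elts f) ⇨ memVal z x)) ?_
    simp [HName.powVal]
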